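/- Let 1 ≤ p ≤ q < ∞ and let X₁, …, X_n, Y be Banach spaces. Every continuous n-linear map T : X₁ × ⋯ × X_n → Y which is strongly (p,p)-summing is strongly (q,q)-summing. -/

import Mathlib

open scoped BigOperators

/-- A continuous `n`-linear map `T : X₁ × ⋯ × X_n → Y` is strongly `(q,p)`-summing if there
is `C ≥ 0` with `(∑ⱼ ‖T(xⱼ¹,…,xⱼⁿ)‖^q)^{1/q} ≤ C (sup_{φ∈B} ∑ⱼ |φ(xⱼ¹,…,xⱼⁿ)|^p)^{1/p}`
for all finite families, where `B` is the closed unit ball of the space of continuous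
`n`-linear scalar forms. -/
def IsStronglySumming {𝕜 : Type*} [RCLike 𝕜] {n : ℕ} {X : Fin n → Type*}
    [∀ i, NormedAddCommGroup (X i)] [∀ i, NormedSpace 𝕜 (X i)]
    {Y : Type*} [NormedAddCommGroup Y] [NormedSpace 𝕜 Y]
    (q p : ℝ) (T : ContinuousMultilinearMap 𝕜 X Y) : Prop :=
  ∃ C : ℝ, 0 ≤ C ∧ ∀ (m : ℕ) (x : Fin m → ∀ i, X i),
    (∑ j, ‖T (x j)‖ ^ q) ^ (1 / q) ≤
      C * (⨆ φ : {φ : ContinuousMultilinearMap 𝕜 X 𝕜 // ‖φ‖ ≤ 1},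
        ∑ j, ‖φ.1 (x j)‖ ^ p) ^ (1 / p)

/-- The family of sums `φ ↦ ∑ⱼ ‖φ(xⱼ)‖^r` over the unit ball is bounded above. -/
lemma stmt5_bdd {𝕜 : Type*} [RCLike 𝕜] {n : ℕ} {X : Fin n → Type*}
    [∀ i, NormedAddCommGroup (X i)] [∀ i, NormedSpace 𝕜 (X i)]
    (r : ℝ) (hr : 0 ≤ r) {m : ℕ} (x : Fin m → ∀ i, X i) :
    BddAbove (Set.range fun φ : {φ : ContinuousMultilinearMap 𝕜 X 𝕜 // ‖φ‖ ≤ 1} =>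
      ∑ j, ‖φ.1 (x j)‖ ^ r) := by
  refine ⟨∑ j, (∏ i, ‖x j i‖) ^ r, ?_⟩
  rintro _ ⟨φ, rfl⟩
  refine Finset.sum_le_sum fun j _ => Real.rpow_le_rpow (norm_nonneg _) ?_ hr
  calc ‖φ.1 (x j)‖ ≤ ‖φ.1‖ * ∏ i, ‖x j i‖ := φ.1.le_opNorm _
    _ ≤ ∏ i, ‖x j i‖ := mul_le_of_le_one_left (Finset.prod_nonneg fun i _ => norm_nonneg _) φ.2

/-- Hölder step: `∑ aⱼ^(q-p) bⱼ^p ≤ (∑ aⱼ^q)^((q-p)/q) (∑ bⱼ^q)^(p/q)`. -/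
lemma stmt5_holder {m : ℕ} {p q : ℝ} (hp : 0 < p) (hpq : p < q) (a b : Fin m → ℝ)
    (ha : ∀ j, 0 ≤ a j) (hb : ∀ j, 0 ≤ b j) :
    ∑ j, a j ^ (q - p) * b j ^ p ≤
      (∑ j, a j ^ q) ^ ((q - p) / q) * (∑ j, b j ^ q) ^ (p / q) := by
  have hq : 0 < q := hp.trans hpq
  have hqp : 0 < q - p := by linarith
  have hconj : Real.HolderConjugate (q / (q - p)) (q / p) := by
    constructor
    · rw [inv_div, inv_div, ← add_div, sub_add_cancel, div_self hq.ne', inv_one]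
    · exact div_pos hq hqp
    · exact div_pos hq hp
  calc ∑ j, a j ^ (q - p) * b j ^ p
      ≤ (∑ j, (a j ^ (q - p)) ^ (q / (q - p))) ^ (1 / (q / (q - p))) *
        (∑ j, (b j ^ p) ^ (q / p)) ^ (1 / (q / p)) :=
        Real.inner_le_Lp_mul_Lq_of_nonneg _ hconj
          (fun j _ => Real.rpow_nonneg (ha j) _) (fun j _ => Real.rpow_nonneg (hb j) _)
    _ = _ := by
        rw [one_div_div, one_div_div]
        congr 2
        · exact Finset.sum_congr rfl fun j _ => by
            rw [← Real.rpow_mul (ha j), mul_comm, div_mul_cancel₀ _ hqp.ne']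
        · exact Finset.sum_congr rfl fun j _ => by
            rw [← Real.rpow_mul (hb j), mul_comm, div_mul_cancel₀ _ hp.ne']

/-- Scaling one coordinate scales the value of a multilinear map. -/
lemma stmt5_val {𝕜 : Type*} [RCLike 𝕜] {n : ℕ} {X : Fin n → Type*}
    [∀ i, NormedAddCommGroup (X i)] [∀ i, NormedSpace 𝕜 (X i)]
    {Z : Type*} [NormedAddCommGroup Z] [NormedSpace 𝕜 Z]
    (S : ContinuousMultilinearMap 𝕜 X Z) (i₀ : Fin n) (v : ∀ i, X i) {c : ℝ} (hc : 0 ≤ c) :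
    ‖S (Function.update v i₀ ((c : 𝕜) • v i₀))‖ = c * ‖S v‖ := by
  rw [S.map_update_smul, Function.update_eq_self, norm_smul, RCLike.norm_ofReal, abs_of_nonneg hc]

/-- If `1 ≤ p ≤ q < ∞` and `X₁, …, X_n, Y` are Banach spaces, every
continuous `n`-linear strongly `(p,p)`-summing map is strongly `(q,q)`-summing. -/
theorem stmt5 {𝕜 : Type*} [RCLike 𝕜] {n : ℕ} {X : Fin n → Type*}
    [∀ i, NormedAddCommGroup (X i)] [∀ i, NormedSpace 𝕜 (X i)]
    [∀ i, CompleteSpace (X i)]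
    {Y : Type*} [NormedAddCommGroup Y] [NormedSpace 𝕜 Y] [CompleteSpace Y]
    (p q : ℝ) (hp : 1 ≤ p) (hpq : p ≤ q)
    (T : ContinuousMultilinearMap 𝕜 X Y)
    (hT : IsStronglySumming p p T) :
    IsStronglySumming q q T := by
  obtain ⟨C, hC0, hC⟩ := hT
  rcases eq_or_lt_of_le hpq with rfl | hlt
  · exact ⟨C, hC0, hC⟩
  have hp0 : 0 < p := lt_of_lt_of_le one_pos hp
  have hq0 : 0 < q := hp0.trans hlt
  refine ⟨C, hC0, fun m x => ?_⟩
  haveI : Nonempty {φ : ContinuousMultilinearMap 𝕜 X 𝕜 // ‖φ‖ ≤ 1} := ⟨⟨0, by simp⟩⟩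
  -- abbreviations
  set D : ℝ := ⨆ φ : {φ : ContinuousMultilinearMap 𝕜 X 𝕜 // ‖φ‖ ≤ 1},
    ∑ j, ‖φ.1 (x j)‖ ^ q with hD
  have hzero : (⟨0, by simp⟩ : {φ : ContinuousMultilinearMap 𝕜 X 𝕜 // ‖φ‖ ≤ 1}) =
    (⟨0, by simp⟩ : {φ : ContinuousMultilinearMap 𝕜 X 𝕜 // ‖φ‖ ≤ 1}) := rfl
  have hDnn : 0 ≤ D := by
    refine le_trans ?_ (le_ciSup (stmt5_bdd q hq0.le x) ⟨0, by simp⟩)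
    simp [Real.zero_rpow hq0.ne']
  rcases Nat.eq_zero_or_pos n with hn | hn
  · -- the case `n = 0`: `T` is constant
    subst hn
    have hTle : ∀ j, ‖T (x j)‖ ≤ C := by
      intro j
      have h1 := hC 1 fun _ => x j
      simp only [Fin.sum_univ_one] at h1
      rw [← Real.rpow_mul (norm_nonneg _), mul_one_div_cancel hp0.ne',
        Real.rpow_one] at h1
      refine h1.trans ?_
      have hb1 : ∀ φ : {φ : ContinuousMultilinearMap 𝕜 X 𝕜 // ‖φ‖ ≤ 1},
          ‖φ.1 (x j)‖ ^ p ≤ 1 := by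
        intro φ
        refine Real.rpow_le_one (norm_nonneg _) ?_ hp0.le
        calc ‖φ.1 (x j)‖ ≤ ‖φ.1‖ * ∏ i, ‖x j i‖ := φ.1.le_opNorm _
          _ ≤ 1 := by simpa using φ.2
      have hsup : (⨆ φ : {φ : ContinuousMultilinearMap 𝕜 X 𝕜 // ‖φ‖ ≤ 1},
          ‖φ.1 (x j)‖ ^ p) ≤ 1 := ciSup_le hb1
      calc C * (⨆ φ : {φ : ContinuousMultilinearMap 𝕜 X 𝕜 // ‖φ‖ ≤ 1},
          ‖φ.1 (x j)‖ ^ p) ^ (1 / p) ≤ C * 1 ^ (1 / p) := by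
            refine mul_le_mul_of_nonneg_left (Real.rpow_le_rpow ?_ hsup (by positivity)) hC0
            refine le_trans ?_ (le_ciSup ⟨1, by rintro _ ⟨φ, rfl⟩; exact hb1 φ⟩
              (⟨0, by simp⟩ : {φ : ContinuousMultilinearMap 𝕜 X 𝕜 // ‖φ‖ ≤ 1}))
            simp [Real.zero_rpow hp0.ne']
        _ = C := by rw [Real.one_rpow, mul_one]
    have hmD : (m : ℝ) ≤ D := by
      refine le_trans ?_ (le_ciSup (stmt5_bdd q hq0.le x)
        ⟨ContinuousMultilinearMap.constOfIsEmpty 𝕜 X (1 : 𝕜), by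
          rw [ContinuousMultilinearMap.norm_constOfIsEmpty]; simp⟩)
      simp
    calc (∑ j, ‖T (x j)‖ ^ q) ^ (1 / q)
        ≤ ((m : ℝ) * C ^ q) ^ (1 / q) := by
          refine Real.rpow_le_rpow (Finset.sum_nonneg fun j _ =>
            Real.rpow_nonneg (norm_nonneg _) _) ?_ (by positivity)
          calc ∑ j, ‖T (x j)‖ ^ q ≤ ∑ _j : Fin m, C ^ q :=
              Finset.sum_le_sum fun j _ => Real.rpow_le_rpow (norm_nonneg _) (hTle j) hq0.le
            _ = (m : ℝ) * C ^ q := by simp [mul_comm]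
      _ ≤ (D * C ^ q) ^ (1 / q) := by
          refine Real.rpow_le_rpow (by positivity) ?_ (by positivity)
          exact mul_le_mul_of_nonneg_right hmD (Real.rpow_nonneg hC0 _)
      _ = C * D ^ (1 / q) := by
          rw [Real.mul_rpow hDnn (Real.rpow_nonneg hC0 _), ← Real.rpow_mul hC0,
            mul_one_div_cancel hq0.ne', Real.rpow_one, mul_comm]
  · -- main case `n ≥ 1`: a scaling argument
    set i₀ : Fin n := ⟨0, hn⟩
    set e : ℝ := (q - p) / p with he
    set y : Fin m → ∀ i, X i := fun j =>
      Function.update (x j) i₀ (((‖T (x j)‖ ^ e : ℝ) : 𝕜) • x j i₀) with hy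
    have hvalT : ∀ j : Fin m, ‖T (y j)‖ = ‖T (x j)‖ ^ e * ‖T (x j)‖ := by
      intro j
      simp only [hy]
      exact stmt5_val T i₀ (x j) (Real.rpow_nonneg (norm_nonneg _) _)
    have hvalφ : ∀ (φ : ContinuousMultilinearMap 𝕜 X 𝕜) (j : Fin m),
        ‖φ (y j)‖ = ‖T (x j)‖ ^ e * ‖φ (x j)‖ := by
      intro φ j
      simp only [hy]
      exact stmt5_val φ i₀ (x j) (Real.rpow_nonneg (norm_nonneg _) _)
    set S : ℝ := ∑ j, ‖T (x j)‖ ^ q with hS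
    have hSnn : 0 ≤ S :=
      Finset.sum_nonneg fun j _ => Real.rpow_nonneg (norm_nonneg _) _
    have hTy : ∀ j, ‖T (y j)‖ ^ p = ‖T (x j)‖ ^ q := by
      intro j
      rw [hvalT j, Real.mul_rpow (Real.rpow_nonneg (norm_nonneg _) _) (norm_nonneg _),
        ← Real.rpow_mul (norm_nonneg _), he, div_mul_cancel₀ _ hp0.ne',
        ← Real.rpow_add_of_nonneg (norm_nonneg _) (by linarith) hp0.le, sub_add_cancel]
    have hφy : ∀ (φ : {φ : ContinuousMultilinearMap 𝕜 X 𝕜 // ‖φ‖ ≤ 1}) (j : Fin m),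
        ‖φ.1 (y j)‖ ^ p = ‖T (x j)‖ ^ (q - p) * ‖φ.1 (x j)‖ ^ p := by
      intro φ j
      rw [hvalφ φ.1 j, Real.mul_rpow (Real.rpow_nonneg (norm_nonneg _) _) (norm_nonneg _),
        ← Real.rpow_mul (norm_nonneg _), he, div_mul_cancel₀ _ hp0.ne']
    have h1 := hC m y
    rw [show (∑ j, ‖T (y j)‖ ^ p) = S from Finset.sum_congr rfl fun j _ => hTy j] at h1
    have h2 : (⨆ φ : {φ : ContinuousMultilinearMap 𝕜 X 𝕜 // ‖φ‖ ≤ 1},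
        ∑ j, ‖φ.1 (y j)‖ ^ p) ≤ S ^ ((q - p) / q) * D ^ (p / q) := by
      refine ciSup_le fun φ => ?_
      calc ∑ j, ‖φ.1 (y j)‖ ^ p
          = ∑ j, ‖T (x j)‖ ^ (q - p) * ‖φ.1 (x j)‖ ^ p :=
            Finset.sum_congr rfl fun j _ => hφy φ j
        _ ≤ S ^ ((q - p) / q) * (∑ j, ‖φ.1 (x j)‖ ^ q) ^ (p / q) :=
            stmt5_holder hp0 hlt _ _ (fun j => norm_nonneg _) fun j => norm_nonneg _
        _ ≤ S ^ ((q - p) / q) * D ^ (p / q) := by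
            refine mul_le_mul_of_nonneg_left
              (Real.rpow_le_rpow (Finset.sum_nonneg fun j _ =>
                Real.rpow_nonneg (norm_nonneg _) _) (le_ciSup (stmt5_bdd q hq0.le x) φ)
                (by positivity)) (Real.rpow_nonneg hSnn _)
    have hsupynn : 0 ≤ ⨆ φ : {φ : ContinuousMultilinearMap 𝕜 X 𝕜 // ‖φ‖ ≤ 1},
        ∑ j, ‖φ.1 (y j)‖ ^ p := by
      refine le_trans ?_ (le_ciSup (stmt5_bdd p hp0.le y) ⟨0, by simp⟩)
      simp [Real.zero_rpow hp0.ne']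
    have h3 : S ^ (1 / p) ≤ C * (S ^ ((q - p) / (q * p)) * D ^ (1 / q)) := by
      refine h1.trans ?_
      refine mul_le_mul_of_nonneg_left ?_ hC0
      calc (⨆ φ : {φ : ContinuousMultilinearMap 𝕜 X 𝕜 // ‖φ‖ ≤ 1},
          ∑ j, ‖φ.1 (y j)‖ ^ p) ^ (1 / p)
          ≤ (S ^ ((q - p) / q) * D ^ (p / q)) ^ (1 / p) :=
            Real.rpow_le_rpow hsupynn h2 (by positivity)
        _ = S ^ ((q - p) / (q * p)) * D ^ (1 / q) := by
            rw [Real.mul_rpow (Real.rpow_nonneg hSnn _) (Real.rpow_nonneg hDnn _),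
              ← Real.rpow_mul hSnn, ← Real.rpow_mul hDnn]
            congr 2
            · rw [div_mul_div_comm, mul_one]
            · rw [div_mul_div_comm, mul_one, mul_comm, ← div_div, div_self hp0.ne']
    rcases hSnn.eq_or_lt with hS0 | hSpos
    · rw [← hS0, Real.zero_rpow (one_div_ne_zero hq0.ne')]
      exact mul_nonneg hC0 (Real.rpow_nonneg hDnn _)
    · have key : S ^ ((q - p) / (q * p)) * S ^ (1 / q) ≤
          S ^ ((q - p) / (q * p)) * (C * D ^ (1 / q)) := by
        rw [← Real.rpow_add hSpos]
        calc S ^ ((q - p) / (q * p) + 1 / q) = S ^ (1 / p) := by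
              congr 1
              field_simp
              ring
          _ ≤ C * (S ^ ((q - p) / (q * p)) * D ^ (1 / q)) := h3
          _ = S ^ ((q - p) / (q * p)) * (C * D ^ (1 / q)) := by ring
      exact le_of_mul_le_mul_left key (Real.rpow_pos_of_pos hSpos _)
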